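/- (Power-scaling Case I, equations (34)–(37)) If α = ε = 1 and γ > 0, then lim_{M→∞} R̃_i(M) = min(R̄_{1,i}, R̄_{2,i}), where R̄_{1,i} = λ·log₂(1 + E_u·(ψ_{AR,i}² + ψ_{BR,i}²)/(ψ_{AR,i} + ψ_{BR,i})), R̄_{XR,i} = λ·log₂(1 + E_u·ψ_{XR,i}²/(ψ_{AR,i} + ψ_{BR,i})) for X ∈ {A,B}, R̄_{RX,i} = λ·log₂(1 + E_r·ψ_{XR,i}²/S) for X ∈ {A,B}, and R̄_{2,i} = min(R̄_{AR,i}, R̄_{RB,i}) + min(R̄_{BR,i}, R̄_{RA,i}). -/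

import Mathlib

open Real Filter Topology Finset

noncomputable section

/-- `η = τ·p_p·β/(1+τ·p_p·β)`. -/
def etaP (τ pp β : ℝ) : ℝ := τ * pp * β / (1 + τ * pp * β)

/-- `ω = β(K+η)/(K+1)`. -/
def omegaP (τ pp β K : ℝ) : ℝ := β * (K + etaP τ pp β) / (K + 1)

/-- `σ² = β/((1+τ·p_p·β)(K+1))`. -/
def sigma2P (τ pp β K : ℝ) : ℝ := β / ((1 + τ * pp * β) * (K + 1))

/-- Generic interference coefficient: with `(b₁,k₁)` and `(b₂,k₂)` the two links involved,
`b₁·b₂/((k₁+1)(k₂+1))·[(k₁+η₁)/(1+τ·p_p·b₂) + k₂·η₁ + k₁·η₂ + η₁·η₂]`.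
It specializes to `ξ_{XR,ij}`, `χ_{XR,ij}` and `ζ_{XR,ij}` of (25)–(27). -/
def xiP (τ pp b1 k1 b2 k2 : ℝ) : ℝ :=
  b1 * b2 / ((k1 + 1) * (k2 + 1)) *
    ((k1 + etaP τ pp b1) / (1 + τ * pp * b2) + k2 * etaP τ pp b1
      + k1 * etaP τ pp b2 + etaP τ pp b1 * etaP τ pp b2)

variable {N : ℕ}

/-- `q_i = p_u σ²_{AR,i} + p_u σ²_{BR,i} + 1`. -/
def qP (τ pp pu : ℝ) (βA βB KA KB : Fin N → ℝ) (i : Fin N) : ℝ :=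
  pu * sigma2P τ pp (βA i) (KA i) + pu * sigma2P τ pp (βB i) (KB i) + 1

/-- `Q_i = Σ_{j≠i} p_u·(ξ_{AR,ij}+ξ_{BR,ij}+χ_{AR,ij}+χ_{BR,ij})`. -/
def QP (τ pp pu : ℝ) (βA βB KA KB : Fin N → ℝ) (i : Fin N) : ℝ :=
  ∑ j ∈ Finset.univ \ {i},
    pu * (xiP τ pp (βA i) (KA i) (βA j) (KA j) + xiP τ pp (βB i) (KB i) (βA j) (KA j)
      + xiP τ pp (βA i) (KA i) (βB j) (KB j) + xiP τ pp (βB i) (KB i) (βB j) (KB j))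

/-- `Z_{ij} = p_r·(ζ_{AR,ij}+ζ_{BR,ij})`. -/
def ZP (τ pp pr : ℝ) (βA βB KA KB : Fin N → ℝ) (i j : Fin N) : ℝ :=
  pr * (xiP τ pp (βA j) (KA j) (βA i) (KA i) + xiP τ pp (βB j) (KB j) (βA i) (KA i))

/-- `R̃_{1,i}(M)` of Theorem 1 (uplink phase). -/
def R1P (lam τ pp pu : ℝ) (βA βB KA KB : Fin N → ℝ) (i : Fin N) (M : ℝ) : ℝ :=
  lam * logb 2 (1 +
    (M * pu * (omegaP τ pp (βA i) (KA i)) ^ 2 + M * pu * (omegaP τ pp (βB i) (KB i)) ^ 2)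
      / ((omegaP τ pp (βA i) (KA i) + omegaP τ pp (βB i) (KB i)) * qP τ pp pu βA βB KA KB i
          + QP τ pp pu βA βB KA KB i))

/-- `R̃_{AR,i}(M)` of Theorem 1. -/
def RARP (lam τ pp pu : ℝ) (βA βB KA KB : Fin N → ℝ) (i : Fin N) (M : ℝ) : ℝ :=
  lam * logb 2 (1 + M * pu * (omegaP τ pp (βA i) (KA i)) ^ 2
      / ((omegaP τ pp (βA i) (KA i) + omegaP τ pp (βB i) (KB i)) * qP τ pp pu βA βB KA KB i
          + QP τ pp pu βA βB KA KB i))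

/-- `R̃_{BR,i}(M)` of Theorem 1. -/
def RBRP (lam τ pp pu : ℝ) (βA βB KA KB : Fin N → ℝ) (i : Fin N) (M : ℝ) : ℝ :=
  lam * logb 2 (1 + M * pu * (omegaP τ pp (βB i) (KB i)) ^ 2
      / ((omegaP τ pp (βA i) (KA i) + omegaP τ pp (βB i) (KB i)) * qP τ pp pu βA βB KA KB i
          + QP τ pp pu βA βB KA KB i))

/-- `R̃_{RA,i}(M)` of Theorem 1 (downlink to `U_{A,i}`). -/
def RRAP (lam τ pp pr : ℝ) (βA βB KA KB : Fin N → ℝ) (i : Fin N) (M : ℝ) : ℝ :=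
  lam * logb 2 (1 + M * pr * (omegaP τ pp (βA i) (KA i)) ^ 2
      / (∑ j, (omegaP τ pp (βA j) (KA j) + omegaP τ pp (βB j) (KB j)
          + ZP τ pp pr βA βB KA KB i j)))

/-- `R̃_{RB,i}(M)` of Theorem 1 (downlink to `U_{B,i}`). -/
def RRBP (lam τ pp pr : ℝ) (βA βB KA KB : Fin N → ℝ) (i : Fin N) (M : ℝ) : ℝ :=
  lam * logb 2 (1 + M * pr * (omegaP τ pp (βB i) (KB i)) ^ 2
      / (∑ j, (omegaP τ pp (βA j) (KA j) + omegaP τ pp (βB j) (KB j)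
          + ZP τ pp pr βA βB KA KB i j)))

/-- `R̃_{2,i}(M) = min(R̃_{AR,i}, R̃_{RB,i}) + min(R̃_{BR,i}, R̃_{RA,i})`. -/
def R2P (lam τ pp pu pr : ℝ) (βA βB KA KB : Fin N → ℝ) (i : Fin N) (M : ℝ) : ℝ :=
  min (RARP lam τ pp pu βA βB KA KB i M) (RRBP lam τ pp pr βA βB KA KB i M)
    + min (RBRP lam τ pp pu βA βB KA KB i M) (RRAP lam τ pp pr βA βB KA KB i M)

/-- `R̃_i(M) = min(R̃_{1,i}(M), R̃_{2,i}(M))`. -/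
def RtotP (lam τ pp pu pr : ℝ) (βA βB KA KB : Fin N → ℝ) (i : Fin N) (M : ℝ) : ℝ :=
  min (R1P lam τ pp pu βA βB KA KB i M) (R2P lam τ pp pu pr βA βB KA KB i M)

end


lemma tendsto_etaP {pp : ℕ → ℝ} (hpp : Filter.Tendsto pp Filter.atTop (nhds 0)) (τ β : ℝ) :
    Filter.Tendsto (fun M => etaP τ (pp M) β) Filter.atTop (nhds 0) := by
  have h1 : Filter.Tendsto (fun M => τ * pp M * β) Filter.atTop (nhds 0) := by
    simpa using (hpp.const_mul τ).mul_const β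
  have h2 : Filter.Tendsto (fun M => 1 + τ * pp M * β) Filter.atTop (nhds 1) := by
    simpa using h1.const_add 1
  simpa [etaP, Pi.div_def] using h1.div h2 one_ne_zero

lemma tendsto_xiP {pp : ℕ → ℝ} (hpp : Filter.Tendsto pp Filter.atTop (nhds 0))
    (τ b1 k1 b2 k2 : ℝ) :
    Filter.Tendsto (fun M => xiP τ (pp M) b1 k1 b2 k2) Filter.atTop
      (nhds (b1 * b2 / ((k1 + 1) * (k2 + 1)) * k1)) := by
  have hη1 := tendsto_etaP hpp τ b1
  have hη2 := tendsto_etaP hpp τ b2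
  have hd : Filter.Tendsto (fun M => 1 + τ * pp M * b2) Filter.atTop (nhds 1) := by
    simpa using ((hpp.const_mul τ).mul_const b2).const_add 1
  have ht1 : Filter.Tendsto (fun M => (k1 + etaP τ (pp M) b1) / (1 + τ * pp M * b2))
      Filter.atTop (nhds k1) := by
    simpa [Pi.div_def] using (hη1.const_add k1).div hd one_ne_zero
  have hbr : Filter.Tendsto (fun M => (k1 + etaP τ (pp M) b1) / (1 + τ * pp M * b2)
      + k2 * etaP τ (pp M) b1 + k1 * etaP τ (pp M) b2
      + etaP τ (pp M) b1 * etaP τ (pp M) b2) Filter.atTop (nhds k1) := by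
    simpa using ((ht1.add (hη1.const_mul k2)).add (hη2.const_mul k1)).add (hη1.mul hη2)
  simpa [xiP] using hbr.const_mul (b1 * b2 / ((k1 + 1) * (k2 + 1)))

/-- Power-scaling Case I, equations (34)–(37): if `α = ε = 1` and `γ > 0`
then `R̃_i(M) → min(R̄_{1,i}, R̄_{2,i})` as `M → ∞`. -/
theorem power_scaling_case_I
    (N : ℕ) (hN : 1 ≤ N) (i : Fin N) (T τ : ℝ) (hτ : 0 < τ) (hT : τ < T)
    (lam : ℝ) (hlam : lam = (T - τ) / (2 * T))
    (Eu Er Ep : ℝ) (hEu : 0 < Eu) (hEr : 0 < Er) (hEp : 0 < Ep)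
    (βA βB KA KB : Fin N → ℝ)
    (hβA : ∀ j, 0 < βA j) (hβB : ∀ j, 0 < βB j)
    (hKA : ∀ j, 0 < KA j) (hKB : ∀ j, 0 < KB j)
    (α ε γ : ℝ) (hα : α = 1) (hε : ε = 1) (hγ : 0 < γ)
    (psiA psiB : Fin N → ℝ)
    (hpsiA : ∀ j, psiA j = βA j * KA j / (KA j + 1))
    (hpsiB : ∀ j, psiB j = βB j * KB j / (KB j + 1))
    (S : ℝ) (hS : S = ∑ j, (psiA j + psiB j)) :
    Tendsto (fun M : ℕ =>
        RtotP lam τ (Ep / (M : ℝ) ^ γ) (Eu / (M : ℝ) ^ α) (Er / (M : ℝ) ^ ε)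
          βA βB KA KB i (M : ℝ))
      atTop
      (𝓝 (min
        (lam * logb 2 (1 + Eu * ((psiA i) ^ 2 + (psiB i) ^ 2) / (psiA i + psiB i)))
        (min (lam * logb 2 (1 + Eu * (psiA i) ^ 2 / (psiA i + psiB i)))
             (lam * logb 2 (1 + Er * (psiB i) ^ 2 / S))
          + min (lam * logb 2 (1 + Eu * (psiB i) ^ 2 / (psiA i + psiB i)))
                (lam * logb 2 (1 + Er * (psiA i) ^ 2 / S))))) := by
  subst hα hε hS
  -- basic limits of the power coefficients
  have hcast : Tendsto (fun M : ℕ => (M : ℝ)) atTop atTop := tendsto_natCast_atTop_atTop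
  have hpow : ∀ δ : ℝ, 0 < δ → Tendsto (fun M : ℕ => (M : ℝ) ^ δ) atTop atTop := fun δ hδ =>
    (tendsto_rpow_atTop hδ).comp hcast
  have hppt : Tendsto (fun M : ℕ => Ep / (M : ℝ) ^ γ) atTop (𝓝 0) :=
    tendsto_const_nhds.div_atTop (hpow γ hγ)
  have hput : Tendsto (fun M : ℕ => Eu / (M : ℝ) ^ (1 : ℝ)) atTop (𝓝 0) :=
    tendsto_const_nhds.div_atTop (hpow 1 one_pos)
  have hprt : Tendsto (fun M : ℕ => Er / (M : ℝ) ^ (1 : ℝ)) atTop (𝓝 0) :=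
    tendsto_const_nhds.div_atTop (hpow 1 one_pos)
  -- positivity facts
  have hpsiApos : ∀ j, 0 < psiA j := fun j => by
    rw [hpsiA j]; exact div_pos (mul_pos (hβA j) (hKA j)) (by linarith [hKA j])
  have hpsiBpos : ∀ j, 0 < psiB j := fun j => by
    rw [hpsiB j]; exact div_pos (mul_pos (hβB j) (hKB j)) (by linarith [hKB j])
  have hsum : 0 < psiA i + psiB i := add_pos (hpsiApos i) (hpsiBpos i)
  have hSpos : 0 < ∑ j, (psiA j + psiB j) :=
    Finset.sum_pos (fun j _ => add_pos (hpsiApos j) (hpsiBpos j)) ⟨i, Finset.mem_univ i⟩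
  -- limits of omega
  have hωA : ∀ j, Tendsto (fun M : ℕ => omegaP τ (Ep / (M : ℝ) ^ γ) (βA j) (KA j))
      atTop (𝓝 (psiA j)) := by
    intro j
    have h := (((tendsto_etaP hppt τ (βA j)).const_add (KA j)).const_mul (βA j)).div_const
      (KA j + 1)
    rw [hpsiA j]
    simpa [omegaP] using h
  have hωB : ∀ j, Tendsto (fun M : ℕ => omegaP τ (Ep / (M : ℝ) ^ γ) (βB j) (KB j))
      atTop (𝓝 (psiB j)) := by
    intro j
    have h := (((tendsto_etaP hppt τ (βB j)).const_add (KB j)).const_mul (βB j)).div_const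
      (KB j + 1)
    rw [hpsiB j]
    simpa [omegaP] using h
  -- sigma2 tends to a finite limit
  have hσ : ∀ β K : ℝ, 0 < K →
      Tendsto (fun M : ℕ => sigma2P τ (Ep / (M : ℝ) ^ γ) β K) atTop (𝓝 (β / (K + 1))) := by
    intro β K hK
    have hd : Tendsto (fun M : ℕ => (1 + τ * (Ep / (M : ℝ) ^ γ) * β) * (K + 1)) atTop
        (𝓝 ((1 : ℝ) * (K + 1))) := by
      simpa using (((hppt.const_mul τ).mul_const β).const_add 1).mul_const (K + 1)
    have hne : (1 : ℝ) * (K + 1) ≠ 0 := by simp; linarith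
    have := (tendsto_const_nhds : Filter.Tendsto (fun _ : ℕ => β) Filter.atTop (nhds β)).div hd hne
    simpa [sigma2P, Pi.div_def] using this
  -- q_i → 1
  have hq : Tendsto (fun M : ℕ =>
      qP τ (Ep / (M : ℝ) ^ γ) (Eu / (M : ℝ) ^ (1 : ℝ)) βA βB KA KB i) atTop (𝓝 1) := by
    have h := ((hput.mul (hσ (βA i) (KA i) (hKA i))).add
      (hput.mul (hσ (βB i) (KB i) (hKB i)))).add_const 1
    simpa [qP] using h
  -- Q_i → 0
  have hQ : Tendsto (fun M : ℕ =>
      QP τ (Ep / (M : ℝ) ^ γ) (Eu / (M : ℝ) ^ (1 : ℝ)) βA βB KA KB i) atTop (𝓝 0) := by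
    have h : ∀ j ∈ Finset.univ \ {i}, Tendsto (fun M : ℕ =>
        (Eu / (M : ℝ) ^ (1 : ℝ)) *
          (xiP τ (Ep / (M : ℝ) ^ γ) (βA i) (KA i) (βA j) (KA j)
            + xiP τ (Ep / (M : ℝ) ^ γ) (βB i) (KB i) (βA j) (KA j)
            + xiP τ (Ep / (M : ℝ) ^ γ) (βA i) (KA i) (βB j) (KB j)
            + xiP τ (Ep / (M : ℝ) ^ γ) (βB i) (KB i) (βB j) (KB j)))
        atTop (𝓝 0) := by
      intro j _
      have hx := ((((tendsto_xiP hppt τ (βA i) (KA i) (βA j) (KA j)).add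
        (tendsto_xiP hppt τ (βB i) (KB i) (βA j) (KA j))).add
        (tendsto_xiP hppt τ (βA i) (KA i) (βB j) (KB j))).add
        (tendsto_xiP hppt τ (βB i) (KB i) (βB j) (KB j)))
      simpa using hput.mul hx
    have := tendsto_finset_sum (Finset.univ \ {i}) h
    simpa [QP] using this
  -- Z_{ij} → 0
  have hZ : ∀ j, Tendsto (fun M : ℕ =>
      ZP τ (Ep / (M : ℝ) ^ γ) (Er / (M : ℝ) ^ (1 : ℝ)) βA βB KA KB i j) atTop (𝓝 0) := by
    intro j
    have hx := (tendsto_xiP hppt τ (βA j) (KA j) (βA i) (KA i)).add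
      (tendsto_xiP hppt τ (βB j) (KB j) (βA i) (KA i))
    simpa [ZP] using hprt.mul hx
  -- uplink denominator
  have hDup : Tendsto (fun M : ℕ =>
      (omegaP τ (Ep / (M : ℝ) ^ γ) (βA i) (KA i) + omegaP τ (Ep / (M : ℝ) ^ γ) (βB i) (KB i))
          * qP τ (Ep / (M : ℝ) ^ γ) (Eu / (M : ℝ) ^ (1 : ℝ)) βA βB KA KB i
        + QP τ (Ep / (M : ℝ) ^ γ) (Eu / (M : ℝ) ^ (1 : ℝ)) βA βB KA KB i) atTop
      (𝓝 (psiA i + psiB i)) := by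
    simpa using (((hωA i).add (hωB i)).mul hq).add hQ
  -- downlink denominator
  have hDdn : Tendsto (fun M : ℕ => ∑ j, (omegaP τ (Ep / (M : ℝ) ^ γ) (βA j) (KA j)
      + omegaP τ (Ep / (M : ℝ) ^ γ) (βB j) (KB j)
      + ZP τ (Ep / (M : ℝ) ^ γ) (Er / (M : ℝ) ^ (1 : ℝ)) βA βB KA KB i j)) atTop
      (𝓝 (∑ j, (psiA j + psiB j))) := by
    refine tendsto_finset_sum _ (fun j _ => ?_)
    simpa using ((hωA j).add (hωB j)).add (hZ j)
  -- numerator helper : M * (E / M^1) * c M → E * L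
  have hMc : ∀ (E : ℝ) (c : ℕ → ℝ) (L : ℝ), Tendsto c atTop (𝓝 L) →
      Tendsto (fun M : ℕ => (M : ℝ) * (E / (M : ℝ) ^ (1 : ℝ)) * c M) atTop (𝓝 (E * L)) := by
    intro E c L hc
    refine (hc.const_mul E).congr' ?_
    filter_upwards [eventually_ge_atTop 1] with M hM
    have h0 : (M : ℝ) ≠ 0 := Nat.cast_ne_zero.mpr (by omega)
    rw [Real.rpow_one]
    field_simp
  have hnumA := hMc Eu _ _ ((hωA i).pow 2)
  have hnumB := hMc Eu _ _ ((hωB i).pow 2)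
  have hnumA' := hMc Er _ _ ((hωA i).pow 2)
  have hnumB' := hMc Er _ _ ((hωB i).pow 2)
  -- wrapper through the logarithm
  have wrap : ∀ {f : ℕ → ℝ} {F : ℝ}, Tendsto f atTop (𝓝 F) → 0 ≤ F →
      Tendsto (fun M => lam * logb 2 (1 + f M)) atTop (𝓝 (lam * logb 2 (1 + F))) := by
    intro f F hf hF
    have h1 : Tendsto (fun M => 1 + f M) atTop (𝓝 (1 + F)) := hf.const_add 1
    have h2 : ContinuousAt (logb 2) (1 + F) := Real.continuousAt_logb (by linarith)
    exact (h2.tendsto.comp h1).const_mul lam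
  -- the five rate limits
  have hR1 : Tendsto (fun M : ℕ => R1P lam τ (Ep / (M : ℝ) ^ γ) (Eu / (M : ℝ) ^ (1 : ℝ))
      βA βB KA KB i (M : ℝ)) atTop
      (𝓝 (lam * logb 2 (1 + Eu * ((psiA i) ^ 2 + (psiB i) ^ 2) / (psiA i + psiB i)))) := by
    have hfr := (hnumA.add hnumB).div hDup hsum.ne'
    have heq : (Eu * psiA i ^ 2 + Eu * psiB i ^ 2) / (psiA i + psiB i)
        = Eu * (psiA i ^ 2 + psiB i ^ 2) / (psiA i + psiB i) := by ring
    rw [heq] at hfr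
    have := wrap hfr (by positivity)
    simpa [R1P] using this
  have hRAR : Tendsto (fun M : ℕ => RARP lam τ (Ep / (M : ℝ) ^ γ) (Eu / (M : ℝ) ^ (1 : ℝ))
      βA βB KA KB i (M : ℝ)) atTop
      (𝓝 (lam * logb 2 (1 + Eu * (psiA i) ^ 2 / (psiA i + psiB i)))) := by
    have hfr := hnumA.div hDup hsum.ne'
    have := wrap hfr (by positivity)
    simpa [RARP, mul_div_assoc] using this
  have hRBR : Tendsto (fun M : ℕ => RBRP lam τ (Ep / (M : ℝ) ^ γ) (Eu / (M : ℝ) ^ (1 : ℝ))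
      βA βB KA KB i (M : ℝ)) atTop
      (𝓝 (lam * logb 2 (1 + Eu * (psiB i) ^ 2 / (psiA i + psiB i)))) := by
    have hfr := hnumB.div hDup hsum.ne'
    have := wrap hfr (by positivity)
    simpa [RBRP, mul_div_assoc] using this
  have hRRA : Tendsto (fun M : ℕ => RRAP lam τ (Ep / (M : ℝ) ^ γ) (Er / (M : ℝ) ^ (1 : ℝ))
      βA βB KA KB i (M : ℝ)) atTop
      (𝓝 (lam * logb 2 (1 + Er * (psiA i) ^ 2 / ∑ j, (psiA j + psiB j)))) := by
    have hfr := hnumA'.div hDdn hSpos.ne'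
    have := wrap hfr (by positivity)
    simpa [RRAP, mul_div_assoc] using this
  have hRRB : Tendsto (fun M : ℕ => RRBP lam τ (Ep / (M : ℝ) ^ γ) (Er / (M : ℝ) ^ (1 : ℝ))
      βA βB KA KB i (M : ℝ)) atTop
      (𝓝 (lam * logb 2 (1 + Er * (psiB i) ^ 2 / ∑ j, (psiA j + psiB j)))) := by
    have hfr := hnumB'.div hDdn hSpos.ne'
    have := wrap hfr (by positivity)
    simpa [RRBP, mul_div_assoc] using this
  -- assemble
  simp only [RtotP, R2P]
  exact hR1.min ((hRAR.min hRRB).add (hRBR.min hRRA))
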